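/- For every integer n ≥ 0 and every real c > 1, for all t > 0 and x ∈ ℝ one has (|x|/√t)^n · Γ₀(t,x) ≤ √c · (c·n/((c−1)·√e))^{n/2} · Γ₀(c·t, x), where Γ₀(t,x) = (2πt)^{−1/2} exp(−x²/(2t)) is the one-dimensional Gaussian heat kernel. -/

import Mathlib

noncomputable def Gauss (t x : ℝ) : ℝ :=
  (Real.sqrt (2 * Real.pi * t))⁻¹ * Real.exp (-x ^ 2 / (2 * t))

theorem stmt_0 (n : ℕ) (c : ℝ) (hc : 1 < c) (t x : ℝ) (ht : 0 < t) :
    (|x| / Real.sqrt t) ^ n * Gauss t x ≤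
      Real.sqrt c * (c * n / ((c - 1) * Real.sqrt (Real.exp 1))) ^ ((n : ℝ) / 2) *
        Gauss (c * t) x := by
  have hc0 : (0:ℝ) < c := lt_trans one_pos hc
  have hc1 : 0 < c - 1 := sub_pos.mpr hc
  have hse : (0:ℝ) < Real.sqrt (Real.exp 1) := Real.sqrt_pos.mpr (Real.exp_pos 1)
  set y := |x| / Real.sqrt t with hy_def
  have hy : 0 ≤ y := div_nonneg (abs_nonneg x) (Real.sqrt_nonneg t)
  have hy2 : y ^ 2 = x ^ 2 / t := by
    rw [hy_def, div_pow, sq_abs, Real.sq_sqrt ht.le]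
  set M := c * n / ((c - 1) * Real.sqrt (Real.exp 1)) with hM_def
  have hMnn : 0 ≤ M := div_nonneg (by positivity) (by positivity)
  have hGrw : Real.sqrt (2 * Real.pi * (c * t)) = Real.sqrt c * Real.sqrt (2 * Real.pi * t) := by
    rw [show 2 * Real.pi * (c * t) = c * (2 * Real.pi * t) by ring, Real.sqrt_mul hc0.le]
  have hπt : Real.sqrt (2 * Real.pi * t) ≠ 0 := by
    have : (0:ℝ) < 2 * Real.pi * t := by positivity
    exact ne_of_gt (Real.sqrt_pos.mpr this)
  have hπ : 0 ≤ (Real.sqrt (2 * Real.pi * t))⁻¹ := inv_nonneg.mpr (Real.sqrt_nonneg _)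
  have hsc : Real.sqrt c ≠ 0 := ne_of_gt (Real.sqrt_pos.mpr hc0)
  have hexp1 : -x ^ 2 / (2 * t) = -y ^ 2 / 2 := by
    rw [hy2]; ring
  have hexp2 : -x ^ 2 / (2 * (c * t)) = -y ^ 2 / (2 * c) := by
    rw [hy2]; field_simp
  have hKrw : M ^ ((n : ℝ) / 2) = (Real.sqrt M) ^ n := by
    rw [show ((n : ℝ) / 2) = ((1:ℝ)/2) * n by ring, Real.rpow_mul hMnn,
      Real.rpow_natCast, ← Real.sqrt_eq_rpow]
  -- the key pointwise inequality
  have key : y ^ n * Real.exp (-y ^ 2 / 2) ≤ (Real.sqrt M) ^ n * Real.exp (-y ^ 2 / (2 * c)) := by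
    rcases Nat.eq_zero_or_pos n with hn | hn
    · subst hn
      simp only [pow_zero, one_mul]
      apply Real.exp_le_exp.mpr
      rw [div_le_div_iff₀ (by norm_num) (by positivity)]
      nlinarith [sq_nonneg y]
    · have hn0 : (0:ℝ) < n := by exact_mod_cast hn
      have hM : 0 < M := div_pos (mul_pos hc0 hn0) (mul_pos hc1 hse)
      have hsM : 0 < Real.sqrt M := Real.sqrt_pos.mpr hM
      have hs2 : Real.sqrt (Real.exp 1) ≤ 2 := by
        have h4 : Real.sqrt (Real.exp 1) ≤ Real.sqrt 4 :=
          Real.sqrt_le_sqrt (by nlinarith [Real.exp_one_lt_d9])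
        have : Real.sqrt 4 = 2 := by
          rw [show (4:ℝ) = 2 ^ 2 by norm_num, Real.sqrt_sq (by norm_num : (0:ℝ) ≤ 2)]
        linarith
      have step1 : ∀ s : ℝ, s ≤ Real.exp (s ^ 2 / (2 * Real.sqrt (Real.exp 1))) := by
        intro s
        have h1 : s ^ 2 / 4 ≤ s ^ 2 / (2 * Real.sqrt (Real.exp 1)) :=
          div_le_div_of_nonneg_left (sq_nonneg s) (by positivity) (by linarith)
        have h2 : s ≤ 1 + s ^ 2 / 4 := by nlinarith [sq_nonneg (s - 2)]
        have h3 := Real.add_one_le_exp (s ^ 2 / (2 * Real.sqrt (Real.exp 1)))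
        linarith
      have step2 : y ≤ Real.sqrt M * Real.exp ((c - 1) / (2 * c * n) * y ^ 2) := by
        have h := step1 (y / Real.sqrt M)
        have hq : (y / Real.sqrt M) ^ 2 / (2 * Real.sqrt (Real.exp 1)) =
            (c - 1) / (2 * c * n) * y ^ 2 := by
          rw [div_pow, Real.sq_sqrt hM.le, hM_def]
          field_simp
        rw [hq] at h
        calc y = Real.sqrt M * (y / Real.sqrt M) := by field_simp
          _ ≤ _ := mul_le_mul_of_nonneg_left h hsM.le
      have step3 : y ^ n ≤ (Real.sqrt M) ^ n * Real.exp ((c - 1) / (2 * c) * y ^ 2) := by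
        calc y ^ n ≤ (Real.sqrt M * Real.exp ((c - 1) / (2 * c * n) * y ^ 2)) ^ n :=
              pow_le_pow_left₀ hy step2 n
          _ = (Real.sqrt M) ^ n * Real.exp ((c - 1) / (2 * c) * y ^ 2) := by
              rw [mul_pow, ← Real.exp_nat_mul]
              congr 1
              field_simp
      calc y ^ n * Real.exp (-y ^ 2 / 2)
          ≤ ((Real.sqrt M) ^ n * Real.exp ((c - 1) / (2 * c) * y ^ 2)) * Real.exp (-y ^ 2 / 2) :=
            mul_le_mul_of_nonneg_right step3 (Real.exp_pos _).le
        _ = (Real.sqrt M) ^ n * Real.exp (-y ^ 2 / (2 * c)) := by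
            rw [mul_assoc, ← Real.exp_add]
            congr 2
            field_simp
            ring
  -- assemble
  unfold Gauss
  rw [hGrw, hexp1, hexp2, hKrw]
  calc y ^ n * ((Real.sqrt (2 * Real.pi * t))⁻¹ * Real.exp (-y ^ 2 / 2))
      = (Real.sqrt (2 * Real.pi * t))⁻¹ * (y ^ n * Real.exp (-y ^ 2 / 2)) := by ring
    _ ≤ (Real.sqrt (2 * Real.pi * t))⁻¹ * ((Real.sqrt M) ^ n * Real.exp (-y ^ 2 / (2 * c))) :=
        mul_le_mul_of_nonneg_left key hπ
    _ = Real.sqrt c * (Real.sqrt M) ^ n *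
        ((Real.sqrt c * Real.sqrt (2 * Real.pi * t))⁻¹ * Real.exp (-y ^ 2 / (2 * c))) := by
        field_simp
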